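/- arXiv:1410.7530 — 3 statements merged into one kernel-verified Lean document; each statement's English description precedes it below -/
import Mathlib

section
/- Let f : ℕ → ℚ be defined by f(0) = 0 and, for n ≥ 1, f(n) = f(n-1) + 1 + (1/n) * ∑_{i=0}^{n-1} f(i). Then for all n, f(n) = ∑_{k=1}^{n} (1/k!) * C(n,k), where C(n,k) is the binomial coefficient. -/
open Finset

private def g (n : ℕ) : ℚ := ∑ j ∈ range n, (1 / ((j+1).factorial : ℚ)) * (n.choose (j+1))

private lemma g_eq (n : ℕ) :
    (∑ k ∈ Finset.Icc 1 n, (1 / (Nat.factorial k : ℚ)) * (n.choose k)) = g n := by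
  rw [g, show Finset.Icc 1 n = Finset.Ico 1 (n+1) by rw [Finset.Ico_add_one_right_eq_Icc],
    Finset.sum_Ico_eq_sum_range]
  simp [add_comm 1]

private lemma g_ext (n : ℕ) :
    g n = ∑ j ∈ range (n+1), (1 / ((j+1).factorial : ℚ)) * (n.choose (j+1)) := by
  rw [Finset.sum_range_succ, g]
  simp [Nat.choose_eq_zero_of_lt]

private lemma hockey (n : ℕ) :
    ∑ i ∈ range (n+1), g i = ∑ j ∈ range n, (1 / ((j+1).factorial : ℚ)) * ((n+1).choose (j+2)) := by
  induction n with
  | zero => simp [g]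
  | succ n ih =>
    rw [Finset.sum_range_succ, ih]
    have hrhs : (∑ j ∈ range (n+1), (1 / ((j+1).factorial : ℚ)) * ((n+2).choose (j+2)))
        = (∑ j ∈ range (n+1), (1 / ((j+1).factorial : ℚ)) * ((n+1).choose (j+1)))
          + ∑ j ∈ range (n+1), (1 / ((j+1).factorial : ℚ)) * ((n+1).choose (j+2)) := by
      rw [← Finset.sum_add_distrib]
      apply Finset.sum_congr rfl
      intro j _
      rw [show (n+2).choose (j+2) = (n+1).choose (j+1) + (n+1).choose (j+2) from
        Nat.choose_succ_succ (n+1) (j+1)]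
      push_cast; ring
    have htop : (∑ j ∈ range (n+1), (1 / ((j+1).factorial : ℚ)) * ((n+1).choose (j+2)))
        = ∑ j ∈ range n, (1 / ((j+1).factorial : ℚ)) * ((n+1).choose (j+2)) := by
      rw [Finset.sum_range_succ]
      simp [Nat.choose_eq_zero_of_lt]
    rw [hrhs, htop, g]
    ring

private lemma key (n : ℕ) :
    ((n:ℚ)+1) * (g (n+1) - g n - 1) = ∑ i ∈ range (n+1), g i := by
  rw [hockey]
  have h1 : g (n+1) = (∑ j ∈ range n, (1 / ((j+2).factorial : ℚ)) * ((n+1).choose (j+2))) + (n+1) := by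
    rw [g, Finset.sum_range_succ']
    simp
  have h2 : g n = (∑ j ∈ range n, (1 / ((j+2).factorial : ℚ)) * (n.choose (j+2))) + n := by
    rw [g_ext, Finset.sum_range_succ']
    simp
  have hsub : g (n+1) - g n - 1 = ∑ j ∈ range n, (1 / ((j+2).factorial : ℚ)) * (n.choose (j+1)) := by
    have hd : g (n+1) - g n - 1 =
        (∑ j ∈ range n, (1 / ((j+2).factorial : ℚ)) * ((n+1).choose (j+2)))
        - ∑ j ∈ range n, (1 / ((j+2).factorial : ℚ)) * (n.choose (j+2)) := by
      rw [h1, h2]; ring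
    rw [hd, ← Finset.sum_sub_distrib]
    apply Finset.sum_congr rfl
    intro j _
    rw [show (n+1).choose (j+2) = n.choose (j+1) + n.choose (j+2) from
      Nat.choose_succ_succ n (j+1)]
    push_cast; ring
  rw [hsub, Finset.mul_sum]
  apply Finset.sum_congr rfl
  intro j _
  have hm : ((n:ℚ)+1) * (n.choose (j+1)) = ((n+1).choose (j+2)) * ((j:ℚ)+2) := by
    exact_mod_cast congrArg (Nat.cast : ℕ → ℚ) (Nat.add_one_mul_choose_eq n (j+1))
  have hf : ((j+2).factorial : ℚ) = ((j:ℚ)+2) * ((j+1).factorial : ℚ) := by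
    rw [Nat.factorial_succ]; push_cast; ring
  have hne1 : ((j+2).factorial : ℚ) ≠ 0 := by positivity
  have hne2 : ((j+1).factorial : ℚ) ≠ 0 := by positivity
  field_simp
  nlinarith [hm, hf]

theorem stmt_0 (f : ℕ → ℚ)
    (h0 : f 0 = 0)
    (hrec : ∀ n : ℕ, 1 ≤ n →
      f n = f (n - 1) + 1 + (1 / (n : ℚ)) * ∑ i ∈ Finset.range n, f i) :
    ∀ n : ℕ, f n = ∑ k ∈ Finset.Icc 1 n, (1 / (Nat.factorial k : ℚ)) * (n.choose k) := by
  intro n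
  induction n using Nat.strong_induction_on with
  | _ n ih =>
    match n with
    | 0 => simpa using h0
    | (m+1) =>
      rw [g_eq]
      have hrm := hrec (m+1) (Nat.le_add_left 1 m)
      simp only [Nat.add_sub_cancel] at hrm
      have hsum : ∑ i ∈ Finset.range (m+1), f i = ∑ i ∈ Finset.range (m+1), g i := by
        apply Finset.sum_congr rfl
        intro i hi
        rw [ih i (Finset.mem_range.mp hi), g_eq]
      have hfm : f m = g m := by rw [ih m (Nat.lt_succ_self m), g_eq]
      rw [hrm, hsum, hfm, ← key m]
      have hne : ((m:ℚ)+1) ≠ 0 := by positivity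
      push_cast
      field_simp
      ring
end

section
/- There exist constants c > 0 and N₀ such that for all n ≥ N₀, with p = ⌊√n⌋, we have (1/2) * (1/p!) * C(n,p) ≥ exp(c * √n). -/
open Nat Finset in
lemma aux_pow_le_choose (n k : ℕ) (h : k * k ≤ n) : k ^ k ≤ n.choose k := by
  have h1 : k ! * k ^ k ≤ k ! * n.choose k := by
    rw [← Nat.descFactorial_eq_factorial_mul_choose, Nat.descFactorial_eq_prod_range]
    have h2 : k ! * k ^ k = ∏ i ∈ range k, (k - i) * k := by
      rw [Finset.prod_mul_distrib, ← Nat.descFactorial_eq_prod_range,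
        Nat.descFactorial_self, Finset.prod_const, Finset.card_range]
    rw [h2]
    apply Finset.prod_le_prod'
    intro i hi
    rw [Finset.mem_range] at hi
    have h3 : (k - i) * k = k * k - i * k := by
      rw [Nat.sub_mul]
    have h4 : i ≤ i * k := Nat.le_mul_of_pos_right i (by omega)
    omega
  exact Nat.le_of_mul_le_mul_left h1 k.factorial_pos

open Nat in
lemma aux_fact_le (p : ℕ) (hp : 1 ≤ p) :
    (p ! : ℝ) * Real.exp ((p : ℝ) - 1) ≤ (p : ℝ) ^ (p + 1) := by
  induction p, hp using Nat.le_induction with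
  | base => simp
  | succ p hp ih =>
    have hP : (1 : ℝ) ≤ (p : ℝ) := by exact_mod_cast hp
    have hkey : Real.exp 1 * (p : ℝ) ^ (p + 1) ≤ ((p : ℝ) + 1) ^ (p + 1) := by
      have h1 : (p : ℝ) / ((p : ℝ) + 1) ≤ Real.exp (-(1 / ((p : ℝ) + 1))) := by
        have := Real.add_one_le_exp (-(1 / ((p : ℝ) + 1)))
        have h2 : (p : ℝ) / ((p : ℝ) + 1) = -(1 / ((p : ℝ) + 1)) + 1 := by
          field_simp
          ring
        linarith [this, h2.le]
      have h3 : ((p : ℝ) / ((p : ℝ) + 1)) ^ (p + 1) ≤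
          Real.exp (-(1 / ((p : ℝ) + 1))) ^ (p + 1) :=
        pow_le_pow_left₀ (by positivity) h1 _
      have h4 : Real.exp (-(1 / ((p : ℝ) + 1))) ^ (p + 1) = Real.exp (-1) := by
        rw [← Real.exp_nat_mul]
        congr 1
        field_simp
        push_cast
        ring
      rw [h4, div_pow] at h3
      have h5 : (0 : ℝ) < ((p : ℝ) + 1) ^ (p + 1) := by positivity
      rw [div_le_iff₀ h5] at h3
      have h6 := Real.exp_pos 1
      have h7 : Real.exp (-1) * Real.exp 1 = 1 := by
        rw [← Real.exp_add]; norm_num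
      nlinarith [h3, h6]
    have hcast : ((p + 1 : ℕ) : ℝ) = (p : ℝ) + 1 := by push_cast; ring
    calc ((p + 1)! : ℝ) * Real.exp (((p + 1 : ℕ) : ℝ) - 1)
        = ((p : ℝ) + 1) * ((p ! : ℝ) * Real.exp ((p : ℝ) - 1)) * Real.exp 1 := by
          rw [Nat.factorial_succ]
          push_cast
          rw [show ((p : ℝ) + 1) - 1 = ((p : ℝ) - 1) + 1 by ring, Real.exp_add]
          ring
      _ ≤ ((p : ℝ) + 1) * (p : ℝ) ^ (p + 1) * Real.exp 1 := by
          gcongr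
      _ ≤ ((p : ℝ) + 1) * ((p : ℝ) + 1) ^ (p + 1) := by
          rw [mul_assoc]
          apply mul_le_mul_of_nonneg_left _ (by positivity)
          calc (p : ℝ) ^ (p + 1) * Real.exp 1 = Real.exp 1 * (p : ℝ) ^ (p + 1) := by ring
            _ ≤ ((p : ℝ) + 1) ^ (p + 1) := hkey
      _ = (((p + 1 : ℕ) : ℝ)) ^ (p + 1 + 1) := by rw [hcast]; ring

theorem stmt_10 :
    ∃ c : ℝ, 0 < c ∧ ∃ N₀ : ℕ, ∀ n : ℕ, N₀ ≤ n →
      (1 / 2 : ℝ) * (1 / (Nat.factorial (Nat.sqrt n) : ℝ)) * (n.choose (Nat.sqrt n) : ℝ) ≥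
        Real.exp (c * Real.sqrt n) := by
  refine ⟨1 / 2, by norm_num, 2000, fun n hn => ?_⟩
  set p := Nat.sqrt n with hp
  have hpge : 32 ≤ p := by
    have : Nat.sqrt 2000 ≤ Nat.sqrt n := Nat.sqrt_le_sqrt hn
    simpa using this.trans' (by norm_num)
  have hP : (32 : ℝ) ≤ (p : ℝ) := by exact_mod_cast hpge
  have hp2 : p * p ≤ n := Nat.sqrt_le n
  have hlt : n < (p + 1) * (p + 1) := by simpa [Nat.succ_eq_add_one] using Nat.lt_succ_sqrt n
  have hF : (0 : ℝ) < (Nat.factorial p : ℝ) := by exact_mod_cast (Nat.factorial_pos p)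
  have hchoose : (p : ℝ) ^ p ≤ (n.choose p : ℝ) := by
    exact_mod_cast aux_pow_le_choose n p hp2
  have hfact := aux_fact_le p (by omega)
  have hsn : Real.sqrt n ≤ (p : ℝ) + 1 := by
    have h1 : (n : ℝ) ≤ ((p : ℝ) + 1) ^ 2 := by
      have : (n : ℝ) ≤ ((p + 1) * (p + 1) : ℕ) := by exact_mod_cast hlt.le
      push_cast at this; nlinarith [this]
    have h2 := Real.sqrt_le_sqrt h1
    rwa [Real.sqrt_sq (by positivity)] at h2
  rw [ge_iff_le]
  have hstep : (2 : ℝ) * p ≤ Real.exp (((p : ℝ) - 3) / 2) := by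
    have h1 : (1 : ℝ) + ((p : ℝ) - 3) / 4 ≤ Real.exp (((p : ℝ) - 3) / 4) := by
      have := Real.add_one_le_exp (((p : ℝ) - 3) / 4)
      linarith
    have h2 : Real.exp (((p : ℝ) - 3) / 2) = Real.exp (((p : ℝ) - 3) / 4) ^ 2 := by
      rw [← Real.exp_nat_mul]; norm_num; ring_nf
    rw [h2]
    nlinarith [h1, hP]
  calc Real.exp (1 / 2 * Real.sqrt n)
      ≤ Real.exp (((p : ℝ) + 1) / 2) := by
        apply Real.exp_le_exp.2
        nlinarith [Real.sqrt_nonneg (n : ℝ), hsn]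
    _ ≤ Real.exp ((p : ℝ) - 1) / (2 * p) := by
        rw [le_div_iff₀ (by positivity)]
        calc Real.exp (((p : ℝ) + 1) / 2) * (2 * p)
            ≤ Real.exp (((p : ℝ) + 1) / 2) * Real.exp (((p : ℝ) - 3) / 2) := by
              apply mul_le_mul_of_nonneg_left hstep (Real.exp_pos _).le
          _ = Real.exp ((p : ℝ) - 1) := by rw [← Real.exp_add]; ring_nf
    _ ≤ (p : ℝ) ^ (p + 1) / (Nat.factorial p : ℝ) / (2 * p) := by
        apply div_le_div_of_nonneg_right ?_ (by positivity)
        rw [le_div_iff₀ hF]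
        linarith [hfact]
    _ = 1 / 2 * (1 / (Nat.factorial p : ℝ)) * (p : ℝ) ^ p := by
        rw [pow_succ]
        field_simp
    _ ≤ 1 / 2 * (1 / (Nat.factorial p : ℝ)) * (n.choose p : ℝ) := by
        apply mul_le_mul_of_nonneg_left hchoose (by positivity)
end

section
/- Define f : ℕ → ℚ by f(0)=0 and f(n) = f(n-1) + 1 + (1/n)∑_{i=0}^{n-1} f(i). For a permutation σ of [n] and N ⊆ [n], define g(∅,σ) = 0 and g(N,σ) = g(N\{i},σ) + 1 + g(N ∩ [i-1],σ) where i is the element of N minimizing σ. Then the average of g([n],σ) over all permutations σ of [n] equals f(n). -/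
open Finset Equiv

section helpers

variable {n k : ℕ}

/-- rank of `x` in `W` equals the number of smaller elements of `W`. -/
lemma rank_card {K : ℕ} (W : Finset (Fin n)) (hW : W.card = K) {x : Fin n} (hx : x ∈ W) :
    (W.filter (· < x)).card = (((W.orderIsoOfFin hW).symm ⟨x, hx⟩ : Fin K) : ℕ) := by
  set ov := W.orderIsoOfFin hW with hov
  set r := ov.symm ⟨x, hx⟩ with hr
  have hxr : (⟨x, hx⟩ : {y // y ∈ W}) = ov r := by rw [hr, OrderIso.apply_symm_apply]
  have him : W.filter (· < x) =
      (Finset.univ.filter (fun l : Fin K => l < r)).image (fun l => ((ov l : {y // y ∈ W}) : Fin n)) := by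
    ext y
    simp only [mem_filter, mem_image, Finset.mem_univ, true_and]
    constructor
    · rintro ⟨hyW, hyx⟩
      refine ⟨ov.symm ⟨y, hyW⟩, ?_, ?_⟩
      · rw [← ov.lt_iff_lt, OrderIso.apply_symm_apply, ← hxr]
        exact hyx
      · rw [OrderIso.apply_symm_apply]
    · rintro ⟨l, hl, rfl⟩
      refine ⟨(ov l).2, ?_⟩
      have : ov l < ov r := ov.lt_iff_lt.mpr hl
      rw [← hxr] at this
      exact this
  have hinj : Function.Injective (fun l : Fin K => ((ov l : {y // y ∈ W}) : Fin n)) :=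
    fun a b h => ov.injective (Subtype.coe_injective h)
  rw [him, Finset.card_image_of_injective _ hinj]
  have : Finset.univ.filter (fun l : Fin K => l < r) = Finset.Iio r := by
    ext l; simp
  rw [this, Fin.card_Iio]

lemma cyc_mono {K : ℕ} (j' l1 l2 : Fin (K + 1)) (h1 : l1 ≠ j') (h2 : l2 ≠ j') :
    j'.cycleRange l1 ≤ j'.cycleRange l2 ↔ l1 ≤ l2 := by
  have c : ∀ l : Fin (K + 1), l ≠ j' →
      ((j'.cycleRange l : Fin (K + 1)) : ℕ) = if l < j' then (l : ℕ) + 1 else (l : ℕ) := by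
    intro l hl
    rcases lt_or_gt_of_ne hl with h | h
    · rw [if_pos h, Fin.coe_cycleRange_of_lt h]
    · rw [if_neg (not_lt.mpr h.le), Fin.cycleRange_of_gt h]
  have e1 := c l1 h1
  have e2 := c l2 h2
  rw [Fin.le_def, Fin.le_def, e1, e2]
  have v1 : (l1 : ℕ) ≠ (j' : ℕ) := fun h => h1 (Fin.ext h)
  have v2 : (l2 : ℕ) ≠ (j' : ℕ) := fun h => h2 (Fin.ext h)
  simp only [Fin.lt_def]
  split_ifs <;> omega

/-- the extension of the cycle moving rank `j'` to the bottom. -/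
noncomputable def EP (W : Finset (Fin n)) (hW : W.card = k + 1) (j' : Fin (k + 1)) :
    Equiv.Perm (Fin n) :=
  (Fin.cycleRange j').extendDomain (W.orderIsoOfFin hW).toEquiv

lemma EP_apply_mem (W : Finset (Fin n)) (hW : W.card = k + 1) (j' : Fin (k + 1)) {x : Fin n}
    (hx : x ∈ W) :
    EP W hW j' x = ((W.orderIsoOfFin hW) (j'.cycleRange ((W.orderIsoOfFin hW).symm ⟨x, hx⟩)) : Fin n) :=
  Equiv.Perm.extendDomain_apply_subtype _ _ hx

lemma EP_mem (W : Finset (Fin n)) (hW : W.card = k + 1) (j' : Fin (k + 1)) {x : Fin n}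
    (hx : x ∈ W) : EP W hW j' x ∈ W := by
  rw [EP_apply_mem W hW j' hx]
  exact Subtype.coe_prop _

lemma EP_image (W : Finset (Fin n)) (hW : W.card = k + 1) (j' : Fin (k + 1)) :
    W.image (EP W hW j') = W := by
  apply Finset.eq_of_subset_of_card_le
  · intro x hx
    obtain ⟨y, hy, rfl⟩ := Finset.mem_image.mp hx
    exact EP_mem W hW j' hy
  · rw [Finset.card_image_of_injective _ (EP W hW j').injective]

lemma EP_inv_mem (W : Finset (Fin n)) (hW : W.card = k + 1) (j' : Fin (k + 1)) {x : Fin n}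
    (hx : x ∈ W) : (EP W hW j')⁻¹ x ∈ W := by
  conv at hx => rw [← EP_image W hW j']
  obtain ⟨y, hy, rfl⟩ := Finset.mem_image.mp hx
  rwa [← Equiv.Perm.mul_apply, inv_mul_cancel, Equiv.Perm.one_apply]

lemma EP_congr {W1 W2 : Finset (Fin n)} (h : W1 = W2) (h1 : W1.card = k + 1)
    (h2 : W2.card = k + 1) (j' : Fin (k + 1)) : EP W1 h1 j' = EP W2 h2 j' := by
  subst h; rfl

lemma oio_congr {K : ℕ} {W1 W2 : Finset (Fin n)} (h : W1 = W2) (h1 : W1.card = K)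
    (h2 : W2.card = K) {x : Fin n} (hx1 : x ∈ W1) (hx2 : x ∈ W2) :
    (W1.orderIsoOfFin h1).symm ⟨x, hx1⟩ = (W2.orderIsoOfFin h2).symm ⟨x, hx2⟩ := by
  subst h; rfl

end helpers


lemma EP_inv_image {n k : ℕ} (W : Finset (Fin n)) (hW : W.card = k + 1) (j' : Fin (k + 1)) :
    W.image ⇑(EP W hW j')⁻¹ = W := by
  apply Finset.eq_of_subset_of_card_le
  · intro x hx
    obtain ⟨y, hy, rfl⟩ := Finset.mem_image.mp hx
    exact EP_inv_mem W hW j' hy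
  · rw [Finset.card_image_of_injective _ (EP W hW j')⁻¹.injective]

lemma uniform {n k : ℕ} (M : Finset (Fin n)) (hM : M.card = k + 1) (i : Fin n) (hiM : i ∈ M)
    (F : Equiv.Perm (Fin n) → ℚ)
    (hF : ∀ σ τ : Equiv.Perm (Fin n),
      (∀ a ∈ M.erase i, ∀ b ∈ M.erase i, (σ a ≤ σ b ↔ τ a ≤ τ b)) → F σ = F τ) :
    ∑ σ : Equiv.Perm (Fin n), F σ
      = ((k : ℚ) + 1) * ∑ σ ∈ Finset.univ.filter
          (fun σ : Equiv.Perm (Fin n) => ∀ j ∈ M, σ i ≤ σ j), F σ := by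
  classical
  have hV : ∀ σ : Equiv.Perm (Fin n), (M.image ⇑σ).card = k + 1 := fun σ => by
    rw [Finset.card_image_of_injective _ σ.injective, hM]
  have hmemV : ∀ (σ : Equiv.Perm (Fin n)) {l : Fin n}, l ∈ M → σ l ∈ M.image ⇑σ :=
    fun σ _ hl => Finset.mem_image_of_mem _ hl
  set rk : Equiv.Perm (Fin n) → ℕ := fun σ => (M.filter (fun l => σ l < σ i)).card with hrk
  have hrk_eq : ∀ σ : Equiv.Perm (Fin n),
      rk σ = ((((M.image ⇑σ).orderIsoOfFin (hV σ)).symm ⟨σ i, hmemV σ hiM⟩ : Fin (k+1)) : ℕ) := by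
    intro σ
    have h1 : ((M.image ⇑σ).filter (· < σ i)).card = (M.filter (fun l => σ l < σ i)).card := by
      rw [Finset.filter_image, Finset.card_image_of_injective _ σ.injective]
    rw [hrk]
    simp only
    rw [← h1, rank_card (M.image ⇑σ) (hV σ) (hmemV σ hiM)]
  have hrk_lt : ∀ σ, rk σ < k + 1 := fun σ => by rw [hrk_eq σ]; exact Fin.is_lt _
  have hmaps : ∀ σ ∈ (Finset.univ : Finset (Equiv.Perm (Fin n))), rk σ ∈ Finset.range (k+1) :=
    fun σ _ => Finset.mem_range.mpr (hrk_lt σ)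
  rw [← Finset.sum_fiberwise_of_maps_to hmaps F]
  have hB0 : Finset.univ.filter (fun σ => rk σ = 0)
      = Finset.univ.filter (fun σ : Equiv.Perm (Fin n) => ∀ j ∈ M, σ i ≤ σ j) := by
    ext σ
    simp only [Finset.mem_filter, Finset.mem_univ, true_and, hrk, Finset.card_eq_zero,
      Finset.filter_eq_empty_iff, not_lt]
  have key : ∀ j ∈ Finset.range (k+1),
      ∑ σ ∈ Finset.univ.filter (fun σ => rk σ = j), F σ
        = ∑ σ ∈ Finset.univ.filter (fun σ => rk σ = 0), F σ := by
    intro j hj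
    set j' : Fin (k+1) := ⟨j, Finset.mem_range.mp hj⟩ with hj'def
    have himg : ∀ σ : Equiv.Perm (Fin n),
        M.image ⇑(EP (M.image ⇑σ) (hV σ) j' * σ) = M.image ⇑σ := by
      intro σ
      have h2 : M.image ⇑(EP (M.image ⇑σ) (hV σ) j' * σ)
          = (M.image ⇑σ).image ⇑(EP (M.image ⇑σ) (hV σ) j') := by
        rw [Finset.image_image]; rfl
      rw [h2, EP_image]
    have himg' : ∀ τ : Equiv.Perm (Fin n),
        M.image ⇑((EP (M.image ⇑τ) (hV τ) j')⁻¹ * τ) = M.image ⇑τ := by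
      intro τ
      have h2 : M.image ⇑((EP (M.image ⇑τ) (hV τ) j')⁻¹ * τ)
          = (M.image ⇑τ).image ⇑(EP (M.image ⇑τ) (hV τ) j')⁻¹ := by
        rw [Finset.image_image]; rfl
      rw [h2, EP_inv_image]
    refine Finset.sum_nbij' (fun σ => EP (M.image ⇑σ) (hV σ) j' * σ)
      (fun τ => (EP (M.image ⇑τ) (hV τ) j')⁻¹ * τ) ?_ ?_ ?_ ?_ ?_
    · -- maps to B0
      intro σ hσ
      have hσj : rk σ = j := (Finset.mem_filter.mp hσ).2
      set W := M.image ⇑σ with hW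
      set ov := W.orderIsoOfFin (hV σ) with hov
      have hr : ov.symm ⟨σ i, hmemV σ hiM⟩ = j' := by
        apply Fin.ext
        rw [← hrk_eq σ, hσj]
      simp only [Finset.mem_filter, Finset.mem_univ, true_and]
      have happ : (EP W (hV σ) j' * σ) i = ((ov (j'.cycleRange j') : {y // y ∈ W}) : Fin n) := by
        rw [Equiv.Perm.mul_apply, EP_apply_mem W (hV σ) j' (hmemV σ hiM), hr]
      rw [Fin.cycleRange_self] at happ
      have hrk2 := hrk_eq (EP W (hV σ) j' * σ)
      rw [hrk2]
      rw [oio_congr (himg σ) (hV _) (hV σ) (hmemV _ hiM)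
        (by rw [happ]; exact Subtype.coe_prop _)]
      have : (⟨(EP W (hV σ) j' * σ) i, by rw [happ]; exact Subtype.coe_prop _⟩ : {y // y ∈ W})
          = ov 0 := Subtype.ext happ
      rw [this, OrderIso.symm_apply_apply]
      rfl
    · -- maps back to Bj
      intro τ hτ
      have hτ0 : rk τ = 0 := (Finset.mem_filter.mp hτ).2
      set W := M.image ⇑τ with hW
      set ov := W.orderIsoOfFin (hV τ) with hov
      have hr : ov.symm ⟨τ i, hmemV τ hiM⟩ = 0 := by
        apply Fin.ext
        rw [← hrk_eq τ, hτ0]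
        simp
      have hτi : τ i = ((ov 0 : {y // y ∈ W}) : Fin n) := by
        rw [← hr, OrderIso.apply_symm_apply]
      have happj : EP W (hV τ) j' ((ov j' : {y // y ∈ W}) : Fin n)
          = ((ov 0 : {y // y ∈ W}) : Fin n) := by
        rw [EP_apply_mem W (hV τ) j' (Subtype.coe_prop (ov j'))]
        congr 2
        have : (⟨((ov j' : {y // y ∈ W}) : Fin n), Subtype.coe_prop (ov j')⟩ : {y // y ∈ W})
            = ov j' := Subtype.ext rfl
        rw [this, OrderIso.symm_apply_apply, Fin.cycleRange_self]
      have happ : ((EP W (hV τ) j')⁻¹ * τ) i = ((ov j' : {y // y ∈ W}) : Fin n) := by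
        rw [Equiv.Perm.mul_apply, hτi, ← happj, ← Equiv.Perm.mul_apply, inv_mul_cancel, Equiv.Perm.one_apply]
      simp only [Finset.mem_filter, Finset.mem_univ, true_and]
      rw [hrk_eq ((EP W (hV τ) j')⁻¹ * τ)]
      rw [oio_congr (himg' τ) (hV _) (hV τ) (hmemV _ hiM)
        (by rw [happ]; exact Subtype.coe_prop _)]
      have : (⟨((EP W (hV τ) j')⁻¹ * τ) i, by rw [happ]; exact Subtype.coe_prop _⟩ : {y // y ∈ W})
          = ov j' := Subtype.ext happ
      rw [this, OrderIso.symm_apply_apply]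
    · -- left inverse
      intro σ _
      rw [EP_congr (himg σ) (hV _) (hV σ) j', inv_mul_cancel_left]
    · -- right inverse
      intro τ _
      rw [EP_congr (himg' τ) (hV _) (hV τ) j', mul_inv_cancel_left]
    · -- F preserved
      intro σ hσ
      have hσj : rk σ = j := (Finset.mem_filter.mp hσ).2
      set W := M.image ⇑σ with hW
      set ov := W.orderIsoOfFin (hV σ) with hov
      have hr : ov.symm ⟨σ i, hmemV σ hiM⟩ = j' := by
        apply Fin.ext
        rw [← hrk_eq σ, hσj]
      apply hF
      intro a ha b hb
      have haM := Finset.mem_of_mem_erase ha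
      have hbM := Finset.mem_of_mem_erase hb
      have hai : a ≠ i := Finset.ne_of_mem_erase ha
      have hbi : b ≠ i := Finset.ne_of_mem_erase hb
      set la := ov.symm ⟨σ a, hmemV σ haM⟩ with hla
      set lb := ov.symm ⟨σ b, hmemV σ hbM⟩ with hlb
      have hlaj : la ≠ j' := by
        intro h
        rw [hla, ← hr] at h
        have := ov.symm.injective h
        exact hai (σ.injective (Subtype.ext_iff.mp this))
      have hlbj : lb ≠ j' := by
        intro h
        rw [hlb, ← hr] at h
        have := ov.symm.injective h
        exact hbi (σ.injective (Subtype.ext_iff.mp this))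
      have hea : (EP W (hV σ) j' * σ) a = ((ov (j'.cycleRange la) : {y // y ∈ W}) : Fin n) := by
        rw [Equiv.Perm.mul_apply, EP_apply_mem W (hV σ) j' (hmemV σ haM)]
      have heb : (EP W (hV σ) j' * σ) b = ((ov (j'.cycleRange lb) : {y // y ∈ W}) : Fin n) := by
        rw [Equiv.Perm.mul_apply, EP_apply_mem W (hV σ) j' (hmemV σ hbM)]
      rw [hea, heb]
      calc σ a ≤ σ b ↔ (⟨σ a, hmemV σ haM⟩ : {y // y ∈ W}) ≤ ⟨σ b, hmemV σ hbM⟩ :=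
            Iff.rfl
        _ ↔ la ≤ lb := (ov.symm.le_iff_le).symm
        _ ↔ j'.cycleRange la ≤ j'.cycleRange lb := (cyc_mono j' la lb hlaj hlbj).symm
        _ ↔ ov (j'.cycleRange la) ≤ ov (j'.cycleRange lb) := ov.le_iff_le.symm
        _ ↔ _ := Iff.rfl
  rw [Finset.sum_congr rfl key, Finset.sum_const, Finset.card_range, nsmul_eq_mul, hB0]
  push_cast
  ring

lemma g_inv {n : ℕ} (g : Finset (Fin n) → Equiv.Perm (Fin n) → ℚ)
    (hg0 : ∀ σ : Equiv.Perm (Fin n), g ∅ σ = 0)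
    (hgrec : ∀ (N : Finset (Fin n)) (σ : Equiv.Perm (Fin n)) (i : Fin n),
      i ∈ N → (∀ j ∈ N, σ i ≤ σ j) →
      g N σ = g (N.erase i) σ + 1 + g (N.filter (fun j => j < i)) σ) :
    ∀ (M : Finset (Fin n)) (σ τ : Equiv.Perm (Fin n)),
      (∀ a ∈ M, ∀ b ∈ M, (σ a ≤ σ b ↔ τ a ≤ τ b)) → g M σ = g M τ := by
  intro M
  induction M using Finset.strongInduction with
  | _ M ih =>
    intro σ τ h
    rcases M.eq_empty_or_nonempty with rfl | hne
    · rw [hg0, hg0]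
    · obtain ⟨i, hiM, hmin⟩ := M.exists_min_image σ hne
      have hminτ : ∀ j ∈ M, τ i ≤ τ j := fun j hj => (h i hiM j hj).mp (hmin j hj)
      have hfe : M.filter (fun jj => jj < i) ⊂ M := by
        refine (Finset.ssubset_iff_of_subset (Finset.filter_subset _ _)).mpr ⟨i, hiM, ?_⟩
        simp
      rw [hgrec M σ i hiM hmin, hgrec M τ i hiM hminτ,
        ih (M.erase i) (Finset.erase_ssubset hiM) σ τ
          (fun a ha b hb => h a (Finset.mem_of_mem_erase ha) b (Finset.mem_of_mem_erase hb)),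
        ih (M.filter (fun jj => jj < i)) hfe σ τ
          (fun a ha b hb => h a (Finset.mem_of_mem_filter a ha) b (Finset.mem_of_mem_filter b hb))]

lemma main_sum {n : ℕ} (f : ℕ → ℚ) (hf0 : f 0 = 0)
    (hfrec : ∀ m : ℕ, 1 ≤ m →
      f m = f (m - 1) + 1 + (1 / (m : ℚ)) * ∑ i ∈ Finset.range m, f i)
    (g : Finset (Fin n) → Equiv.Perm (Fin n) → ℚ)
    (hg0 : ∀ σ : Equiv.Perm (Fin n), g ∅ σ = 0)
    (hgrec : ∀ (N : Finset (Fin n)) (σ : Equiv.Perm (Fin n)) (i : Fin n),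
      i ∈ N → (∀ j ∈ N, σ i ≤ σ j) →
      g N σ = g (N.erase i) σ + 1 + g (N.filter (fun j => j < i)) σ) :
    ∀ M : Finset (Fin n),
      ∑ σ : Equiv.Perm (Fin n), g M σ = (Nat.factorial n : ℚ) * f M.card := by
  intro M
  induction M using Finset.strongInduction with
  | _ M ih =>
    rcases M.eq_empty_or_nonempty with rfl | hne
    · simp [hg0, hf0]
    · obtain ⟨k, hk⟩ : ∃ k, M.card = k + 1 :=
        ⟨M.card - 1, (Nat.succ_pred_eq_of_pos (Finset.card_pos.mpr hne)).symm⟩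
      set A : Fin n → Finset (Equiv.Perm (Fin n)) :=
        fun i => Finset.univ.filter (fun σ : Equiv.Perm (Fin n) => ∀ j ∈ M, σ i ≤ σ j) with hA
      -- step 1: split the sum by the argmin
      have split : ∀ σ : Equiv.Perm (Fin n),
          g M σ = ∑ i ∈ M, if (∀ j ∈ M, σ i ≤ σ j) then g M σ else 0 := by
        intro σ
        obtain ⟨i₀, hi₀, hmin₀⟩ := M.exists_min_image σ hne
        rw [Finset.sum_eq_single_of_mem i₀ hi₀, if_pos hmin₀]
        intro b hb hbne
        rw [if_neg]
        intro hq
        exact hbne (σ.injective (le_antisymm (hq i₀ hi₀) (hmin₀ b hb)))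
      have step1 : ∑ σ : Equiv.Perm (Fin n), g M σ = ∑ i ∈ M, ∑ σ ∈ A i, g M σ := by
        calc ∑ σ : Equiv.Perm (Fin n), g M σ
            = ∑ σ : Equiv.Perm (Fin n), ∑ i ∈ M, if (∀ j ∈ M, σ i ≤ σ j) then g M σ else 0 :=
              Finset.sum_congr rfl (fun σ _ => split σ)
          _ = ∑ i ∈ M, ∑ σ : Equiv.Perm (Fin n), if (∀ j ∈ M, σ i ≤ σ j) then g M σ else 0 :=
              Finset.sum_comm
          _ = ∑ i ∈ M, ∑ σ ∈ A i, g M σ :=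
              Finset.sum_congr rfl (fun i _ => (Finset.sum_filter _ _).symm)
      -- step 2: apply the recursion on each fiber
      have step2 : ∀ i ∈ M, ∑ σ ∈ A i, g M σ
          = ∑ σ ∈ A i, g (M.erase i) σ + ∑ σ ∈ A i, (1 : ℚ)
            + ∑ σ ∈ A i, g (M.filter (fun j => j < i)) σ := by
        intro i hi
        rw [← Finset.sum_add_distrib, ← Finset.sum_add_distrib]
        refine Finset.sum_congr rfl fun σ hσ => ?_
        have hcond : ∀ j ∈ M, σ i ≤ σ j := (Finset.mem_filter.mp hσ).2
        exact hgrec M σ i hi hcond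
      -- uniformity facts
      have hfilter_sub : ∀ i : Fin n, M.filter (fun j => j < i) ⊆ M.erase i := by
        intro i a ha
        have := Finset.mem_filter.mp ha
        exact Finset.mem_erase.mpr ⟨ne_of_lt this.2, this.1⟩
      have uA : ∀ i ∈ M, ((k : ℚ) + 1) * ∑ σ ∈ A i, g (M.erase i) σ
          = (Nat.factorial n : ℚ) * f k := by
        intro i hi
        rw [← uniform M hk i hi (g (M.erase i))
          (fun σ τ hh => g_inv g hg0 hgrec (M.erase i) σ τ hh)]
        rw [ih (M.erase i) (Finset.erase_ssubset hi), Finset.card_erase_of_mem hi, hk]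
        norm_num
      have uB : ∀ i ∈ M, ((k : ℚ) + 1) * ∑ σ ∈ A i, (1 : ℚ) = (Nat.factorial n : ℚ) := by
        intro i hi
        rw [← uniform M hk i hi (fun _ => (1 : ℚ)) (fun _ _ _ => rfl)]
        rw [Finset.sum_const, Finset.card_univ, Fintype.card_perm, Fintype.card_fin,
          nsmul_eq_mul, mul_one]
      have uC : ∀ i ∈ M, ((k : ℚ) + 1) * ∑ σ ∈ A i, g (M.filter (fun j => j < i)) σ
          = (Nat.factorial n : ℚ) * f ((M.filter (fun j => j < i)).card) := by
        intro i hi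
        rw [← uniform M hk i hi (g (M.filter (fun j => j < i)))
          (fun σ τ hh => g_inv g hg0 hgrec (M.filter (fun j => j < i)) σ τ
            (fun a ha b hb => hh a (hfilter_sub i ha) b (hfilter_sub i hb)))]
        have hfs : M.filter (fun j => j < i) ⊂ M :=
          (Finset.ssubset_iff_of_subset (Finset.filter_subset _ _)).mpr ⟨i, hi, by simp⟩
        rw [ih _ hfs]
      -- ranks sum
      have ranksum : ∑ i ∈ M, f ((M.filter (fun j => j < i)).card)
          = ∑ r ∈ Finset.range (k + 1), f r := by
        set rkM : Fin n → ℕ := fun x => (M.filter (fun j => j < x)).card with hrkM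
        have hrkM_eq : ∀ x (hx : x ∈ M),
            rkM x = (((M.orderIsoOfFin hk).symm ⟨x, hx⟩ : Fin (k+1)) : ℕ) := by
          intro x hx
          exact rank_card M hk hx
        have hinj : ∀ x ∈ M, ∀ y ∈ M, rkM x = rkM y → x = y := by
          intro x hx y hy hxy
          rw [hrkM_eq x hx, hrkM_eq y hy] at hxy
          have h2 : (M.orderIsoOfFin hk).symm ⟨x, hx⟩ = (M.orderIsoOfFin hk).symm ⟨y, hy⟩ :=
            Fin.ext hxy
          have h3 := (M.orderIsoOfFin hk).symm.injective h2
          exact Subtype.ext_iff.mp h3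
        have himage : M.image rkM = Finset.range (k + 1) := by
          apply Finset.eq_of_subset_of_card_le
          · intro r hr
            obtain ⟨x, hx, rfl⟩ := Finset.mem_image.mp hr
            rw [Finset.mem_range, hrkM_eq x hx]
            exact Fin.is_lt _
          · rw [Finset.card_range, Finset.card_image_of_injOn hinj, hk]
        rw [← himage, Finset.sum_image hinj]
      -- put everything together
      have big : ((k : ℚ) + 1) * (∑ σ : Equiv.Perm (Fin n), g M σ)
          = ((k : ℚ) + 1) * (Nat.factorial n : ℚ) * f k + ((k : ℚ) + 1) * (Nat.factorial n : ℚ)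
            + (Nat.factorial n : ℚ) * ∑ r ∈ Finset.range (k + 1), f r := by
        rw [step1, Finset.mul_sum]
        have : ∀ i ∈ M, ((k : ℚ) + 1) * ∑ σ ∈ A i, g M σ
            = (Nat.factorial n : ℚ) * f k + (Nat.factorial n : ℚ)
              + (Nat.factorial n : ℚ) * f ((M.filter (fun j => j < i)).card) := by
          intro i hi
          rw [step2 i hi, mul_add, mul_add, uA i hi, uB i hi, uC i hi]
        rw [Finset.sum_congr rfl this]
        rw [Finset.sum_add_distrib, Finset.sum_add_distrib]
        simp only [← Finset.mul_sum]
        rw [ranksum, Finset.sum_const, Finset.sum_const, hk, nsmul_eq_mul, nsmul_eq_mul]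
        push_cast
        ring
      have hfk : f (k + 1) = f k + 1 + (1 / ((k : ℚ) + 1)) * ∑ r ∈ Finset.range (k + 1), f r := by
        have := hfrec (k + 1) (Nat.le_add_left 1 k)
        simpa using this
      have hne' : ((k : ℚ) + 1) ≠ 0 := by positivity
      rw [hk, hfk]
      field_simp at big ⊢
      linarith [big]

theorem stmt_13 (n : ℕ) (f : ℕ → ℚ)
    (hf0 : f 0 = 0)
    (hfrec : ∀ m : ℕ, 1 ≤ m →
      f m = f (m - 1) + 1 + (1 / (m : ℚ)) * ∑ i ∈ Finset.range m, f i)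
    (g : Finset (Fin n) → Equiv.Perm (Fin n) → ℚ)
    (hg0 : ∀ σ : Equiv.Perm (Fin n), g ∅ σ = 0)
    (hgrec : ∀ (N : Finset (Fin n)) (σ : Equiv.Perm (Fin n)) (i : Fin n),
      i ∈ N → (∀ j ∈ N, σ i ≤ σ j) →
      g N σ = g (N.erase i) σ + 1 + g (N.filter (fun j => j < i)) σ) :
    (∑ σ : Equiv.Perm (Fin n), g Finset.univ σ) / (Nat.factorial n : ℚ) = f n := by
  have h := main_sum f hf0 hfrec g hg0 hgrec Finset.univ
  rw [Finset.card_univ, Fintype.card_fin] at h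
  rw [h]
  have hne : (Nat.factorial n : ℚ) ≠ 0 := Nat.cast_ne_zero.mpr (Nat.factorial_ne_zero n)
  field_simp
end
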